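/- For m ≥ 3, the complete simple game with class sizes (2, m, m) and shift-minimal winning types w_1 = (2,1,0), w_2 = (2,0,2), w_3 = (1,0,m), w_4 = (0,m,m-1) is not (m+1)-invariant trade robust: the identity (m-1)·w_1 + 2·w_3 = m·l_1 + 1·l_5 holds componentwise, where l_1 = (2,0,1) and l_5 = (0,m-1,m) are losing types, and (m-1) + 2 = m + 1. -/
import Mathlib


/-- Dominance (partial-sums order) for coalition types with three classes. -/
def Dom3 (s w : ℕ × ℕ × ℕ) : Prop :=
  w.1 ≤ s.1 ∧ w.1 + w.2.1 ≤ s.1 + s.2.1 ∧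
    w.1 + w.2.1 + w.2.2 ≤ s.1 + s.2.1 + s.2.2

/-- For `m ≥ 3`, the complete simple game with class sizes `(2, m, m)` and
shift-minimal winning types `(2,1,0)`, `(2,0,2)`, `(1,0,m)`, `(0,m,m-1)` is not
`(m+1)`-invariant trade robust: `(m-1)·w1 + 2·w3 = m·l1 + 1·l5` with `l1, l5`
losing and `(m-1) + 2 = m + 1`. -/
theorem stmt17 (m : ℕ) (hm : 3 ≤ m) :
    let Win : ℕ × ℕ × ℕ → Prop := fun s =>
      Dom3 s (2, 1, 0) ∨ Dom3 s (2, 0, 2) ∨ Dom3 s (1, 0, m) ∨ Dom3 s (0, m, m - 1)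
    ¬ Win (2, 0, 1) ∧ ¬ Win (0, m - 1, m) ∧
      ((m - 1) * 2 + 2 * 1 = m * 2 + 1 * 0 ∧
        (m - 1) * 1 + 2 * 0 = m * 0 + 1 * (m - 1) ∧
        (m - 1) * 0 + 2 * m = m * 1 + 1 * m) ∧
      (m - 1) + 2 = m + 1 := by
  intro Win
  refine ⟨?_, ?_, ⟨by omega, by omega, by omega⟩, by omega⟩
  · rintro (⟨_, h, _⟩ | ⟨_, _, h⟩ | ⟨_, _, h⟩ | ⟨h, _, _⟩) <;> simp_all <;> omega
  · rintro (⟨h, _, _⟩ | ⟨h, _, _⟩ | ⟨h, _, _⟩ | ⟨_, h, _⟩) <;> simp_all <;> omega
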